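/- For every real t > 0, Σ_{l≥1} 1/(e^{tl} - 1) = (1/(2π)) ∫_{-∞}^{∞} ζ(3 + iy)² · Γ(3 + iy) · t^{-(3+iy)} dy, where ζ is the Riemann zeta function, Γ is the complex Gamma function, t^{-(3+iy)} = exp(-(3+iy)·log t), and the left-hand side is viewed as a complex number; the integrand is integrable over y ∈ ℝ. -/

import Mathlib

open Complex MeasureTheory

open Real Set

lemma key_ineq {x : ℝ} (hx : 0 < x) : 1 / (rexp x - 1) ≤ (1 + 1/x) * rexp (-x) := by
  have hE : x + 1 ≤ rexp x := Real.add_one_le_exp x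
  have hEpos : 0 < rexp x := Real.exp_pos x
  rw [Real.exp_neg, div_le_iff₀ (by linarith)]
  have h1 : (rexp x)⁻¹ * rexp x = 1 := inv_mul_cancel₀ hEpos.ne'
  have h2 : (rexp x)⁻¹ ≤ (x+1)⁻¹ := by
    apply inv_anti₀ (by linarith) hE
  calc (1:ℝ) = (1 + 1/x) * (1 - (x+1)⁻¹) := by field_simp; ring
    _ ≤ (1 + 1/x) * (1 - (rexp x)⁻¹) := by
        apply mul_le_mul_of_nonneg_left (by linarith) (by positivity)
    _ = 1 + 1/x - (1 + 1/x) * (rexp x)⁻¹ := by ring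
    _ = (1 + 1/x) * (rexp x)⁻¹ * (rexp x - 1) := by
        field_simp
  
lemma hasSum_geom {x : ℝ} (hx : 0 < x) :
    HasSum (fun m : ℕ => rexp (-(x * (m + 1)))) (1 / (rexp x - 1)) := by
  have hr0 : (0:ℝ) ≤ rexp (-x) := (Real.exp_pos _).le
  have hr1 : rexp (-x) < 1 := Real.exp_lt_one_iff.mpr (by linarith)
  have h := (hasSum_geometric_of_lt_one hr0 hr1).mul_left (rexp (-x))
  have hE1 : 1 < rexp x := by
    rw [← Real.exp_zero]; exact Real.exp_lt_exp.mpr hx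
  have heq : rexp (-x) * (1 - rexp (-x))⁻¹ = 1 / (rexp x - 1) := by
    rw [Real.exp_neg]
    have h0 : rexp x - 1 ≠ 0 := by linarith
    field_simp
  rw [heq] at h
  refine h.congr_fun fun m => ?_
  rw [← Real.exp_nat_mul, ← Real.exp_add]
  ring_nf

section Fprops
variable {t : ℝ} (ht : 0 < t)
include ht

lemma term_pos (l : ℕ) : 0 < rexp (t * (l+1)) - 1 := by
  have : (0:ℝ) < t * (l+1) := by positivity
  have := Real.exp_lt_exp.mpr this
  rw [Real.exp_zero] at this
  linarith

lemma term_le (l : ℕ) :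
    1 / (rexp (t * (l+1)) - 1) ≤ (1 + 1/t) * rexp (-(t * (l+1))) := by
  have hx : (0:ℝ) < t * (l+1) := by positivity
  refine (key_ineq hx).trans ?_
  apply mul_le_mul_of_nonneg_right _ (Real.exp_pos _).le
  have h1 : 1 / (t * (l+1)) ≤ 1 / t := by
    apply one_div_le_one_div_of_le ht
    nlinarith [Nat.cast_nonneg (α := ℝ) l]
  linarith

lemma summable_exp_aux : Summable (fun l : ℕ => rexp (-(t * (l+1)))) :=
  (hasSum_geom ht).summable

lemma summable_terms : Summable (fun l : ℕ => 1 / (rexp (t * (l+1)) - 1)) := by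
  refine Summable.of_nonneg_of_le (fun l => by have := term_pos ht l; positivity) (term_le ht)
    ((summable_exp_aux ht).mul_left _)

lemma F_nonneg : 0 ≤ ∑' l : ℕ, 1 / (rexp (t * (l+1)) - 1) :=
  tsum_nonneg fun l => by have := term_pos ht l; positivity

lemma F_le : (∑' l : ℕ, 1 / (rexp (t * (l+1)) - 1)) ≤ (1 + 1/t) * ((1 + 1/t) * rexp (-t)) := by
  have h1 : (∑' l : ℕ, 1 / (rexp (t * (l+1)) - 1)) ≤
      ∑' l : ℕ, (1 + 1/t) * rexp (-(t * (l+1))) :=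
    Summable.tsum_le_tsum (term_le ht) (summable_terms ht) ((summable_exp_aux ht).mul_left _)
  have h2 : ∑' l : ℕ, (1 + 1/t) * rexp (-(t * (l+1))) = (1 + 1/t) * (1 / (rexp t - 1)) := by
    rw [tsum_mul_left, (hasSum_geom ht).tsum_eq]
  have h3 : (0:ℝ) ≤ 1 + 1/t := by positivity
  calc _ ≤ (1 + 1/t) * (1 / (rexp t - 1)) := h1.trans_eq h2
    _ ≤ (1 + 1/t) * ((1 + 1/t) * rexp (-t)) := mul_le_mul_of_nonneg_left (key_ineq ht) h3

end Fprops

noncomputable def FF (t : ℝ) : ℂ := ((∑' l : ℕ, 1 / (rexp (t * (l + 1)) - 1) : ℝ) : ℂ)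

lemma hasSum_double {t : ℝ} (ht : 0 < t) :
    HasSum (fun i : ℕ × ℕ => rexp (-(((i.1:ℝ) + 1) * ((i.2:ℝ) + 1)) * t))
      (∑' l : ℕ, 1 / (rexp (t * (l + 1)) - 1)) := by
  have fib : ∀ l : ℕ, HasSum (fun m : ℕ => rexp (-(((l:ℝ) + 1) * ((m:ℝ) + 1)) * t))
      (1 / (rexp (t * (l + 1)) - 1)) := by
    intro l
    have hx : (0:ℝ) < t * (l + 1) := by positivity
    refine (hasSum_geom hx).congr_fun fun m => ?_
    congr 1
    ring
  have hsummable : Summable (fun i : ℕ × ℕ => rexp (-(((i.1:ℝ) + 1) * ((i.2:ℝ) + 1)) * t)) := by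
    rw [summable_prod_of_nonneg (fun i => (Real.exp_pos _).le)]
    refine ⟨fun l => (fib l).summable, ?_⟩
    refine Summable.congr (summable_terms ht) fun l => ?_
    exact ((fib l).tsum_eq).symm
  have h1 := hsummable.hasSum
  have h2 := h1.prod_fiberwise fib
  rw [← h2.tsum_eq] at h1; exact h1

lemma summable_rpow_aux {σ : ℝ} (hσ : 1 < σ) :
    Summable (fun n : ℕ => 1 / ((n:ℝ) + 1) ^ σ) := by
  have h := Real.summable_one_div_nat_rpow.mpr hσ
  have := h.comp_injective (add_left_injective 1)
  refine this.congr fun n => ?_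
  simp only [Function.comp_apply]
  push_cast
  rfl

lemma norm_one_div_cpow {s : ℂ} (n : ℕ) :
    ‖1 / ((n:ℂ) + 1) ^ s‖ = 1 / ((n:ℝ) + 1) ^ s.re := by
  have h : ((n:ℂ) + 1) = (((n:ℝ) + 1 : ℝ) : ℂ) := by push_cast; rfl
  rw [norm_div, norm_one, h,
    Complex.norm_cpow_eq_rpow_re_of_pos (by positivity)]

lemma hasSum_zeta_aux {s : ℂ} (hs : 1 < s.re) :
    HasSum (fun n : ℕ => 1 / ((n:ℂ) + 1) ^ s) (riemannZeta s) := by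
  have hsum : Summable (fun n : ℕ => 1 / ((n:ℂ) + 1) ^ s) := by
    apply Summable.of_norm
    refine (summable_rpow_aux hs).congr fun n => (norm_one_div_cpow n).symm
  exact hsum.hasSum_iff.mpr (zeta_eq_tsum_one_div_nat_add_one_cpow hs).symm

lemma mellin_FF {s : ℂ} (hs : 1 < s.re) :
    mellin FF s = riemannZeta s ^ 2 * Complex.Gamma s := by
  have hsum2 : Summable (fun i : ℕ × ℕ =>
      (1 / ((i.1:ℝ) + 1) ^ s.re) * (1 / ((i.2:ℝ) + 1) ^ s.re)) := by
    apply Summable.mul_of_nonneg (summable_rpow_aux hs) (summable_rpow_aux hs) <;>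
      intro n <;> positivity
  have hnorm : Summable fun n : ℕ => ‖1 / ((n:ℂ) + 1) ^ s‖ :=
    (summable_rpow_aux hs).congr fun n => (norm_one_div_cpow n).symm
  have hF : ∀ t ∈ Ioi (0:ℝ), HasSum
      (fun i : ℕ × ℕ => (1:ℂ) * rexp (-(((i.1:ℝ) + 1) * ((i.2:ℝ) + 1)) * t)) (FF t) := by
    intro t htt
    have h := hasSum_double htt
    have h2 := Complex.ofRealCLM.hasSum h
    refine h2.congr_fun fun i => ?_
    simp only [Complex.ofRealCLM_apply]
    rw [one_mul]
  have h_sum : Summable (fun i : ℕ × ℕ =>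
      ‖(1:ℂ)‖ / (((i.1:ℝ) + 1) * ((i.2:ℝ) + 1)) ^ s.re) := by
    refine hsum2.congr fun i => ?_
    have h1 : (0:ℝ) ≤ (i.1:ℝ) + 1 := by positivity
    have h2 : (0:ℝ) ≤ (i.2:ℝ) + 1 := by positivity
    rw [mul_one_div, div_div, norm_one, Real.mul_rpow h1 h2]
  have main := hasSum_mellin (F := FF) (s := s)
    (fun i : ℕ × ℕ => Or.inr (by positivity : (0:ℝ) < ((i.1:ℝ) + 1) * ((i.2:ℝ) + 1)))
    (by linarith : 0 < s.re) hF h_sum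
  calc mellin FF s
      = ∑' i : ℕ × ℕ, Complex.Gamma s * 1 / ((((i.1:ℝ) + 1) * ((i.2:ℝ) + 1) : ℝ) : ℂ) ^ s :=
        main.tsum_eq.symm
    _ = ∑' i : ℕ × ℕ, Complex.Gamma s * ((1 / ((i.1:ℂ) + 1) ^ s) * (1 / ((i.2:ℂ) + 1) ^ s)) := by
        refine tsum_congr fun i => ?_
        have h1 : (0:ℝ) ≤ (i.1:ℝ) + 1 := by positivity
        have h2 : (0:ℝ) ≤ (i.2:ℝ) + 1 := by positivity
        rw [Complex.ofReal_mul, mul_cpow_ofReal_nonneg h1 h2]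
        push_cast
        ring
    _ = Complex.Gamma s *
        ∑' i : ℕ × ℕ, (1 / ((i.1:ℂ) + 1) ^ s) * (1 / ((i.2:ℂ) + 1) ^ s) := tsum_mul_left
    _ = Complex.Gamma s * ((∑' n : ℕ, 1 / ((n:ℂ) + 1) ^ s) * (∑' n : ℕ, 1 / ((n:ℂ) + 1) ^ s)) := by
        rw [tsum_mul_tsum_of_summable_norm hnorm hnorm]
    _ = riemannZeta s ^ 2 * Complex.Gamma s := by
        rw [← zeta_eq_tsum_one_div_nat_add_one_cpow hs]
        ring

lemma continuousAt_FF {t₀ : ℝ} (ht : 0 < t₀) : ContinuousAt FF t₀ := by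
  have h2 : (0:ℝ) < t₀ / 2 := by linarith
  have hs : ContinuousOn (fun t : ℝ => ∑' l : ℕ, 1 / (rexp (t * (l + 1)) - 1))
      (Ioi (t₀ / 2)) := by
    apply continuousOn_tsum (u := fun l : ℕ => (1 + 1 / (t₀ / 2)) * rexp (-(t₀ / 2 * (l + 1))))
    · intro l
      apply ContinuousOn.div continuousOn_const
      · fun_prop
      · intro x hx
        have hx' : t₀ / 2 < x := hx
        have := term_pos (t := x) (by linarith) l
        linarith
    · exact (summable_exp_aux h2).mul_left _
    · intro l x hx
      have hx' : t₀ / 2 < x := hx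
      have hxpos : (0:ℝ) < x := by linarith
      have hp1 := term_pos (t := t₀ / 2) h2 l
      have hp2 := term_pos (t := x) hxpos l
      rw [Real.norm_eq_abs, abs_of_pos (by positivity)]
      refine le_trans ?_ (term_le h2 l)
      apply one_div_le_one_div_of_le hp1
      have : t₀ / 2 * (l + 1) ≤ x * (l + 1) := by
        apply mul_le_mul_of_nonneg_right hx'.le (by positivity)
      have := Real.exp_le_exp.mpr this
      linarith
  have := hs.continuousAt (Ioi_mem_nhds (by linarith : t₀ / 2 < t₀))
  exact Complex.continuous_ofReal.continuousAt.comp this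

lemma continuousOn_FF : ContinuousOn FF (Ioi 0) := fun t ht =>
  (continuousAt_FF ht).continuousWithinAt

lemma integrableOn_majorant : IntegrableOn (fun x : ℝ => rexp (-x) * (x + 1) ^ 2) (Ioi 0) := by
  have h3 := Real.GammaIntegral_convergent (by norm_num : (0:ℝ) < 3)
  have h2 := Real.GammaIntegral_convergent (by norm_num : (0:ℝ) < 2)
  have h1 := Real.GammaIntegral_convergent (by norm_num : (0:ℝ) < 1)
  have h := (h3.add (h2.const_mul 2)).add h1
  refine MeasureTheory.IntegrableOn.congr_fun h (fun x hx => ?_) measurableSet_Ioi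
  have hx0 : (0:ℝ) < x := hx
  simp only [Pi.add_apply]
  rw [show (3:ℝ) - 1 = ((2:ℕ):ℝ) by norm_num, Real.rpow_natCast,
    show (2:ℝ) - 1 = 1 by norm_num, Real.rpow_one, show (1:ℝ) - 1 = 0 by norm_num,
    Real.rpow_zero]
  ring

lemma mellinConvergent_FF : MellinConvergent FF 3 := by
  have hint : IntegrableOn (fun t : ℝ => ((t:ℂ)) ^ (2:ℕ) * FF t) (Ioi 0) := by
    refine Integrable.mono' integrableOn_majorant ?_ ?_
    · exact (((Complex.continuous_ofReal.pow 2).continuousOn.mul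
        continuousOn_FF).aestronglyMeasurable measurableSet_Ioi)
    · rw [ae_restrict_iff' measurableSet_Ioi]
      filter_upwards with t htt
      have ht : (0:ℝ) < t := htt
      have hFn := F_nonneg ht
      simp only [FF]
      have hkey : t ^ 2 * ((1 + 1/t) * ((1 + 1/t) * rexp (-t))) = rexp (-t) * (t + 1) ^ 2 := by
        field_simp
      rw [norm_mul, norm_pow, Complex.norm_real, Real.norm_eq_abs, abs_of_pos ht,
        Complex.norm_real, Real.norm_eq_abs, _root_.abs_of_nonneg hFn]
      calc t ^ 2 * (∑' l : ℕ, 1 / (rexp (t * (l + 1)) - 1))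
          ≤ t ^ 2 * ((1 + 1/t) * ((1 + 1/t) * rexp (-t))) :=
            mul_le_mul_of_nonneg_left (F_le ht) (by positivity)
        _ = rexp (-t) * (t + 1) ^ 2 := hkey
  refine hint.congr_fun (fun t htt => ?_) measurableSet_Ioi
  rw [show (3:ℂ) - 1 = ((2:ℕ):ℂ) by norm_num, Complex.cpow_natCast]
  rfl

lemma norm_Gamma_le {s : ℂ} (hs : 0 < s.re) : ‖Complex.Gamma s‖ ≤ Real.Gamma s.re := by
  rw [Complex.Gamma_eq_integral hs, Real.Gamma_eq_integral hs, Complex.GammaIntegral]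
  refine (norm_integral_le_integral_norm _).trans_eq ?_
  refine setIntegral_congr_fun measurableSet_Ioi fun x hx => ?_
  have hx0 : (0:ℝ) < x := hx
  rw [norm_mul, Complex.norm_real, Real.norm_eq_abs, Real.abs_exp,
    Complex.norm_cpow_eq_rpow_re_of_pos hx0, Complex.sub_re, Complex.one_re]

lemma norm_Gamma_3 (y : ℝ) : ‖Complex.Gamma (3 + I * y)‖ ≤ 24 / (1 + y ^ 2) := by
  have h3 : (3 + I * y : ℂ) ≠ 0 := fun h => by simpa using congrArg Complex.re h
  have h4 : (4 + I * y : ℂ) ≠ 0 := fun h => by simpa using congrArg Complex.re h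
  have hrec : Complex.Gamma (5 + I * y) = (4 + I * y) * ((3 + I * y) *
      Complex.Gamma (3 + I * y)) := by
    have e1 : Complex.Gamma ((4 + I * y) + 1) = (4 + I * y) * Complex.Gamma (4 + I * y) :=
      Complex.Gamma_add_one _ h4
    have e2 : Complex.Gamma ((3 + I * y) + 1) = (3 + I * y) * Complex.Gamma (3 + I * y) :=
      Complex.Gamma_add_one _ h3
    rw [show (5 : ℂ) + I * y = (4 + I * y) + 1 by ring, e1,
      show (4 : ℂ) + I * y = (3 + I * y) + 1 by ring, e2]
  have h5re : ((5 : ℂ) + I * y).re = 5 := by simp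
  have h5 : ‖Complex.Gamma (5 + I * y)‖ ≤ 24 := by
    refine (norm_Gamma_le (by rw [h5re]; norm_num)).trans ?_
    rw [h5re, show (5:ℝ) = (4:ℕ) + 1 by norm_num, Real.Gamma_nat_eq_factorial]
    norm_num [Nat.factorial]
  have ha : Real.sqrt (1 + y ^ 2) ≤ ‖(3 : ℂ) + I * y‖ := by
    rw [Complex.norm_def]
    apply Real.sqrt_le_sqrt
    simp [Complex.normSq_apply]
    nlinarith
  have hb : Real.sqrt (1 + y ^ 2) ≤ ‖(4 : ℂ) + I * y‖ := by
    rw [Complex.norm_def]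
    apply Real.sqrt_le_sqrt
    simp [Complex.normSq_apply]
    nlinarith
  have hy2 : (0:ℝ) < 1 + y ^ 2 := by positivity
  have hprod : (1 + y ^ 2) ≤ ‖(4 : ℂ) + I * y‖ * ‖(3 : ℂ) + I * y‖ := by
    have := mul_le_mul hb ha (Real.sqrt_nonneg _) (norm_nonneg _)
    rwa [Real.mul_self_sqrt hy2.le] at this
  rw [le_div_iff₀ hy2]
  calc ‖Complex.Gamma (3 + I * y)‖ * (1 + y ^ 2)
      ≤ ‖Complex.Gamma (3 + I * y)‖ * (‖(4 : ℂ) + I * y‖ * ‖(3 : ℂ) + I * y‖) :=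
        mul_le_mul_of_nonneg_left hprod (norm_nonneg _)
    _ = ‖Complex.Gamma (5 + I * y)‖ := by rw [hrec, norm_mul, norm_mul]; ring
    _ ≤ 24 := h5

lemma re_3 (y : ℝ) : ((3 : ℂ) + I * y).re = 3 := by simp

lemma norm_zeta_3 (y : ℝ) :
    ‖riemannZeta (3 + I * y)‖ ≤ ∑' n : ℕ, 1 / ((n:ℝ) + 1) ^ (3:ℝ) := by
  have hre : (1:ℝ) < ((3 : ℂ) + I * y).re := by rw [re_3]; norm_num
  rw [zeta_eq_tsum_one_div_nat_add_one_cpow hre]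
  have hs : Summable fun n : ℕ => ‖1 / ((n:ℂ) + 1) ^ ((3:ℂ) + I * y)‖ := by
    refine (summable_rpow_aux hre).congr fun n => ?_
    rw [norm_one_div_cpow, re_3]
  refine (norm_tsum_le_tsum_norm hs).trans_eq ?_
  refine tsum_congr fun n => ?_
  rw [norm_one_div_cpow, re_3]

lemma continuous_zg : Continuous fun y : ℝ =>
    riemannZeta (3 + I * y) ^ 2 * Complex.Gamma (3 + I * y) := by
  have hc : Continuous fun y : ℝ => (3 : ℂ) + I * y := by fun_prop
  rw [continuous_iff_continuousAt]
  intro y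
  have h1 : (3 + I * (y:ℂ)) ≠ 1 := fun h => by simpa using congrArg Complex.re h
  have h2 : ∀ m : ℕ, (3 + I * (y:ℂ)) ≠ -m := fun m h => by
    have := congrArg Complex.re h
    simp at this
    have : (0:ℝ) ≤ (m:ℝ) := Nat.cast_nonneg m
    linarith [congrArg Complex.re h, this]
  have hz : ContinuousAt riemannZeta (3 + I * y) := (differentiableAt_riemannZeta h1).continuousAt
  have hg : ContinuousAt Complex.Gamma (3 + I * y) :=
    (Complex.differentiableAt_Gamma _ h2).continuousAt
  have hzc : ContinuousAt (fun y : ℝ => riemannZeta (3 + I * y)) y :=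
    ContinuousAt.comp (g := riemannZeta) (f := fun y : ℝ => 3 + I * y) hz hc.continuousAt
  have hgc : ContinuousAt (fun y : ℝ => Complex.Gamma (3 + I * y)) y :=
    ContinuousAt.comp (g := Complex.Gamma) (f := fun y : ℝ => 3 + I * y) hg hc.continuousAt
  exact (hzc.pow 2).mul hgc

lemma integrable_master {g : ℝ → ℂ} (hg : Continuous g) {c : ℝ} (hc : ∀ y, ‖g y‖ ≤ c) :
    Integrable (fun y : ℝ =>
      riemannZeta (3 + I * y) ^ 2 * Complex.Gamma (3 + I * y) * g y) := by
  set C : ℝ := ∑' n : ℕ, 1 / ((n:ℝ) + 1) ^ (3:ℝ) with hC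
  have hC0 : 0 ≤ C := tsum_nonneg fun n => by positivity
  have hc0 : 0 ≤ c := (norm_nonneg (g 0)).trans (hc 0)
  refine Integrable.mono' (g := fun y => C ^ 2 * c * 24 * (1 + y ^ 2)⁻¹)
    ((integrable_inv_one_add_sq.const_mul _)) ((continuous_zg.mul hg).aestronglyMeasurable) ?_
  filter_upwards with y
  rw [norm_mul, norm_mul, norm_pow]
  have h1 := norm_zeta_3 y
  have h2 := norm_Gamma_3 y
  have h3 := hc y
  have hy2 : (0:ℝ) < 1 + y ^ 2 := by positivity
  calc ‖riemannZeta (3 + I * y)‖ ^ 2 * ‖Complex.Gamma (3 + I * y)‖ * ‖g y‖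
      ≤ C ^ 2 * (24 / (1 + y ^ 2)) * c := by
        apply mul_le_mul _ h3 (norm_nonneg _) (by positivity)
        exact mul_le_mul (pow_le_pow_left₀ (norm_nonneg _) h1 2) h2 (norm_nonneg _)
          (by positivity)
    _ = C ^ 2 * c * 24 * (1 + y ^ 2)⁻¹ := by field_simp

/-- Mellin inversion along `Re s = 3`: for `t > 0`,
`Σ_{l≥1} 1/(e^{tl}-1) = (1/(2π)) ∫_ℝ ζ(3+iy)² Γ(3+iy) t^{-(3+iy)} dy`,
the integrand being integrable. -/
theorem mellin_inversion_zeta_sq (t : ℝ) (ht : 0 < t) :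
    Integrable (fun y : ℝ =>
      riemannZeta (3 + I * y) ^ 2 * Complex.Gamma (3 + I * y) *
        Complex.exp (-(3 + I * y) * Real.log t)) ∧
    ((∑' l : ℕ, 1 / (Real.exp (t * (l + 1)) - 1) : ℝ) : ℂ) =
      (1 / (2 * Real.pi)) *
        ∫ y : ℝ, riemannZeta (3 + I * y) ^ 2 * Complex.Gamma (3 + I * y) *
          Complex.exp (-(3 + I * y) * Real.log t) := by
  have hgc : Continuous fun y : ℝ => Complex.exp (-(3 + I * y) * Real.log t) := by fun_prop
  have hgb : ∀ y : ℝ, ‖Complex.exp (-(3 + I * y) * Real.log t)‖ ≤ rexp (-(3 * Real.log t)) := by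
    intro y
    rw [Complex.norm_exp]
    apply le_of_eq
    congr 1
    simp
  have hInt := integrable_master hgc hgb
  refine ⟨hInt, ?_⟩
  have hvert : Complex.VerticalIntegrable (mellin FF) 3 := by
    have h1 := integrable_master continuous_const (c := 1) (fun y : ℝ => le_of_eq norm_one)
    refine h1.congr (Filter.Eventually.of_forall fun y => ?_)
    have hyd : ((3:ℝ):ℂ) + ↑y * I = 3 + I * ↑y := by push_cast; ring
    have hre : (1:ℝ) < (((3:ℝ):ℂ) + ↑y * I).re := by simp
    dsimp only
    rw [mul_one, mellin_FF hre, hyd]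
  have hinv := mellinInv_mellin_eq 3 FF ht mellinConvergent_FF hvert (continuousAt_FF ht)
  refine Eq.trans hinv.symm ?_
  rw [mellinInv]
  have ht0 : (t:ℂ) ≠ 0 := Complex.ofReal_ne_zero.mpr ht.ne'
  have hcoef : ((1 / (2 * Real.pi) : ℝ) : ℂ) = 1 / (2 * (Real.pi : ℂ)) := by push_cast; ring
  rw [Complex.real_smul, hcoef]
  congr 1
  refine integral_congr_ae (Filter.Eventually.of_forall fun y => ?_)
  have hyd : ((3:ℝ):ℂ) + ↑y * I = 3 + I * ↑y := by push_cast; ring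
  have hre : (1:ℝ) < (((3:ℝ):ℂ) + ↑y * I).re := by simp
  dsimp only
  rw [mellin_FF hre, hyd, Complex.cpow_def_of_ne_zero ht0, ← Complex.ofReal_log ht.le,
    smul_eq_mul, mul_comm ((Real.log t : ℂ)) _]
  ring
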